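/- Let M_1, M_2, M_3 be 2×2 complex matrices and μ_1, μ_2, μ_3 ∈ ℂ. Form the 2×6 complex matrix B = (M_1 − μ_1 I | M_2 − μ_2 I | M_3 − μ_3 I) obtained by horizontal concatenation. Then rank(B) ≤ 1 if and only if there exists a one-dimensional subspace L of ℂ^2 such that M_k L ⊆ L for k = 1,2,3 and the induced action of M_k on the quotient ℂ^2/L is multiplication by μ_k for each k (equivalently, there exists an invertible 2×2 matrix S such that S^{-1} M_k S is upper triangular with (2,2)-entry equal to μ_k for each k = 1,2,3). -/
import Mathlib


/-- The `2×6` matrix `(M₁−μ₁I | M₂−μ₂I | M₃−μ₃I)` has rank at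
most one iff there is a one-dimensional subspace `L ⊆ ℂ²` invariant under each
`M_k` on whose quotient each `M_k` acts as multiplication by `μ_k`. -/
theorem stmt14 (M : Fin 3 → Matrix (Fin 2) (Fin 2) ℂ) (μ : Fin 3 → ℂ)
    (B : Matrix (Fin 2) (Fin 3 × Fin 2) ℂ)
    (hB : ∀ (i : Fin 2) (k : Fin 3) (j : Fin 2), B i (k, j) = (M k - μ k • 1) i j) :
    B.rank ≤ 1 ↔
      ∃ L : Submodule ℂ (Fin 2 → ℂ), Module.finrank ℂ L = 1 ∧
        ∀ k, (∀ v ∈ L, (M k).mulVec v ∈ L) ∧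
          ∀ v : Fin 2 → ℂ, (M k).mulVec v - μ k • v ∈ L := by
  classical
  set N : Fin 3 → Matrix (Fin 2) (Fin 2) ℂ := fun k => M k - μ k • 1 with hN
  have hNv : ∀ k v, (N k).mulVec v = (M k).mulVec v - μ k • v := by
    intro k v
    simp [hN, Matrix.sub_mulVec, Matrix.smul_mulVec, Matrix.one_mulVec]
  have hBsum : ∀ x : Fin 3 × Fin 2 → ℂ,
      B.mulVec x = ∑ k, (N k).mulVec (fun j => x (k, j)) := by
    intro x
    funext i
    simp only [Matrix.mulVec, dotProduct, Finset.sum_apply,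
      Fintype.sum_prod_type]
    refine Finset.sum_congr rfl fun k _ => Finset.sum_congr rfl fun j _ => ?_
    rw [hB]
  set T : Submodule ℂ (Fin 2 → ℂ) := LinearMap.range B.mulVecLin with hT
  have hrank : B.rank = Module.finrank ℂ T := rfl
  have hNmem : ∀ k v, (N k).mulVec v ∈ T := by
    intro k v
    refine ⟨fun p => if p.1 = k then v p.2 else 0, ?_⟩
    rw [Matrix.mulVecLin_apply, hBsum]
    rw [Finset.sum_eq_single k]
    · simp
    · intro k' _ hk'
      have : ((N k').mulVec fun j => if k' = k then v j else 0) = 0 := by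
        funext j
        simp [Matrix.mulVec, dotProduct, hk']
      simp [this]
    · simp
  constructor
  · intro h
    rw [hrank] at h
    interval_cases hd : Module.finrank ℂ T
    · -- T = ⊥, pick any line
      have hTbot : T = ⊥ := Submodule.finrank_eq_zero.mp hd
      refine ⟨ℂ ∙ (fun _ => (1 : ℂ)), ?_, ?_⟩
      · rw [finrank_span_singleton]
        intro hc
        have := congrFun hc 0
        simp at this
      · intro k
        have hmem : ∀ v : Fin 2 → ℂ,
            (M k).mulVec v - μ k • v ∈ (ℂ ∙ (fun _ => (1 : ℂ))) := by
          intro v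
          have := hNmem k v
          rw [hTbot] at this
          rw [← hNv k v]
          simp only [Submodule.mem_bot] at this
          rw [this]
          exact Submodule.zero_mem _
        refine ⟨fun v hv => ?_, hmem⟩
        have h1 : (M k).mulVec v = ((M k).mulVec v - μ k • v) + μ k • v := by ring_nf
        rw [h1]
        exact Submodule.add_mem _ (hmem v) (Submodule.smul_mem _ _ hv)
    · refine ⟨T, hd, fun k => ?_⟩
      have hmem : ∀ v : Fin 2 → ℂ, (M k).mulVec v - μ k • v ∈ T := by
        intro v
        rw [← hNv k v]; exact hNmem k v
      refine ⟨fun v hv => ?_, hmem⟩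
      have h1 : (M k).mulVec v = ((M k).mulVec v - μ k • v) + μ k • v := by ring_nf
      rw [h1]
      exact Submodule.add_mem _ (hmem v) (Submodule.smul_mem _ _ hv)
  · rintro ⟨L, hL1, hL⟩
    have hTL : T ≤ L := by
      rintro y ⟨x, rfl⟩
      rw [Matrix.mulVecLin_apply, hBsum]
      refine Submodule.sum_mem _ fun k _ => ?_
      rw [hNv]
      exact (hL k).2 _
    rw [hrank, ← hL1]
    exact Submodule.finrank_mono hTL
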